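/- Let p₁,…,p_s be pairwise distinct odd primes and e₁,…,e_s positive integers. Then there exists an s-tuple (η₁,…,η_s) of integers such that for each i, η_i is a primitive root modulo p_i^d for every d ≥ 1, and η_i ≡ 1 (mod p_j^{e_j}) for all j ≠ i. -/

import Mathlib

/-- Casting helper: `(η : ZMod N)^n = 1` iff `N ∣ η^n - 1`. -/
lemma cast_pow_eq_one_iff (η : ℤ) (N n : ℕ) :
    ((η : ZMod N)) ^ n = 1 ↔ (N : ℤ) ∣ η ^ n - 1 := by
  rw [← ZMod.intCast_zmod_eq_zero_iff_dvd]
  push_cast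
  rw [sub_eq_zero]

/-- Binomial key lemma: for odd prime `p` and `p ∣ t`,
`(1+t)^p = 1 + p t + p t² A` for some integer `A`. -/
lemma lemA {p : ℕ} (hp : p.Prime) (hodd : Odd p) {t : ℤ} (ht : (p : ℤ) ∣ t) :
    ∃ A : ℤ, (1 + t) ^ p = 1 + p * t + p * t ^ 2 * A := by
  have h3 : 3 ≤ p := by
    have h2 := hp.two_le
    have : p ≠ 2 := by rintro rfl; exact (by norm_num : ¬ Odd 2) hodd
    omega
  obtain ⟨m, rfl⟩ : ∃ m, p = m + 3 := ⟨p - 3, by omega⟩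
  have hsum : (t + 1) ^ (m + 3) =
      ∑ k ∈ Finset.range (m + 3 + 1), t ^ k * 1 ^ (m + 3 - k) * ((m + 3).choose k) :=
    add_pow t 1 (m + 3)
  rw [show m + 3 + 1 = (m + 2) + 1 + 1 from rfl] at hsum
  rw [Finset.sum_range_succ' _ ((m + 2) + 1), Finset.sum_range_succ' _ (m + 2)] at hsum
  have hdvd : ((m + 3 : ℕ) : ℤ) * t ^ 2 ∣
      ∑ i ∈ Finset.range (m + 2), t ^ (i + 1 + 1) * 1 ^ (m + 3 - (i + 1 + 1)) * ((m + 3).choose (i + 1 + 1)) := by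
    apply Finset.dvd_sum
    intro i hi
    rw [Finset.mem_range] at hi
    rcases Nat.lt_or_ge (i + 2) (m + 3) with hlt | hge
    · -- p divides the binomial coefficient
      have hc : (m + 3 : ℕ) ∣ (m + 3).choose (i + 2) := by
        have := hp.dvd_choose_self (show i + 2 ≠ 0 by omega) hlt
        exact this
      obtain ⟨C, hC⟩ := hc
      have : t ^ (i + 1 + 1) = t ^ i * t ^ 2 := by ring
      rw [this, hC]
      push_cast
      ring_nf
      exact ⟨t ^ i * C, by ring⟩
    · -- top term: i + 2 = m + 3
      have hieq : i = m + 1 := by omega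
      subst hieq
      obtain ⟨u, hu⟩ := ht
      refine ⟨u * t ^ m * ((m + 3).choose (m + 1 + 1 + 1 : ℕ) : ℤ), ?_⟩
      have : t ^ (m + 1 + 1 + 1) = t * t ^ 2 * t ^ m := by ring
      rw [this, hu]
      ring
  obtain ⟨A, hA⟩ := hdvd
  refine ⟨A, ?_⟩
  have h0 : t ^ (0 + 1) * 1 ^ (m + 3 - (0 + 1)) * ((m + 3).choose (0 + 1) : ℤ) = (m + 3 : ℕ) * t := by
    simp [Nat.choose_one_right]; ring
  rw [add_comm (1 : ℤ) t, hsum, hA, h0]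
  simp [Nat.choose_zero_right]
  push_cast
  ring

/-- Lifting step: `(1 + c p^k)^p = 1 + c' p^(k+1)` with `p ∤ c'`. -/
lemma lemB {p : ℕ} (hp : p.Prime) (hodd : Odd p) {k : ℕ} (hk : 1 ≤ k) {c : ℤ}
    (hc : ¬ (p : ℤ) ∣ c) :
    ∃ c' : ℤ, (1 + c * (p : ℤ) ^ k) ^ p = 1 + c' * (p : ℤ) ^ (k + 1) ∧ ¬ (p : ℤ) ∣ c' := by
  obtain ⟨k', rfl⟩ : ∃ k', k = k' + 1 := ⟨k - 1, by omega⟩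
  have ht : (p : ℤ) ∣ c * (p : ℤ) ^ (k' + 1) := ⟨c * (p:ℤ)^k', by ring⟩
  obtain ⟨A, hA⟩ := lemA hp hodd ht
  refine ⟨c + c ^ 2 * (p : ℤ) ^ (k' + 1) * A, ?_, ?_⟩
  · rw [hA]; ring
  · intro hdvd
    apply hc
    have h2 : (p : ℤ) ∣ c ^ 2 * (p : ℤ) ^ (k' + 1) * A := ⟨c^2 * (p:ℤ)^k' * A, by ring⟩
    exact (dvd_add_right h2).mp (by rwa [add_comm] at hdvd)

/-- Iterated lifting: if `η^(p-1) = 1 + c p` with `p ∤ c`,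
then `η^((p-1) p^j) = 1 + c_j p^(j+1)` with `p ∤ c_j`. -/
lemma lemC {p : ℕ} (hp : p.Prime) (hodd : Odd p) {η c : ℤ}
    (h : η ^ (p - 1) = 1 + c * p) (hc : ¬ (p : ℤ) ∣ c) (j : ℕ) :
    ∃ cj : ℤ, η ^ ((p - 1) * p ^ j) = 1 + cj * (p : ℤ) ^ (j + 1) ∧ ¬ (p : ℤ) ∣ cj := by
  induction j with
  | zero => exact ⟨c, by simpa using h, hc⟩
  | succ n ih =>
    obtain ⟨cn, hcn, hcn'⟩ := ih
    obtain ⟨c', hc', hc''⟩ := lemB hp hodd (show 1 ≤ n + 1 by omega) hcn'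
    refine ⟨c', ?_, hc''⟩
    have : η ^ ((p - 1) * p ^ (n + 1)) = (η ^ ((p - 1) * p ^ n)) ^ p := by
      rw [← pow_mul]; ring_nf
    rw [this, hcn, hc']

/-- If `η` has order `p(p-1)` modulo `p²`, then it is a primitive root mod `p^d` for all `d ≥ 1`. -/
lemma lemKey {p : ℕ} (hp : p.Prime) (hodd : Odd p) {η : ℤ}
    (h2 : orderOf ((η : ZMod (p ^ 2))) = p * (p - 1)) :
    ∀ d : ℕ, 1 ≤ d → orderOf ((η : ZMod (p ^ d))) = Nat.totient (p ^ d) := by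
  haveI : Fact p.Prime := ⟨hp⟩
  have hp3 : 3 ≤ p := by
    have := hp.two_le
    have : p ≠ 2 := by rintro rfl; exact (by norm_num : ¬ Odd 2) hodd
    omega
  -- p does not divide η
  have hnd : ¬ (p : ℤ) ∣ η := by
    intro hdvd
    have hx : ((η : ZMod (p ^ 2))) ^ (p * (p - 1)) = 1 := by
      rw [← h2]; exact pow_orderOf_eq_one _
    rw [cast_pow_eq_one_iff] at hx
    have hpd : (p : ℤ) ∣ η ^ (p * (p - 1)) - 1 :=
      dvd_trans ⟨p, by push_cast; ring⟩ hx
    have h1 : (p : ℤ) ∣ η ^ (p * (p - 1)) :=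
      dvd_pow hdvd (Nat.mul_ne_zero (by omega) (by omega))
    have : (p : ℤ) ∣ 1 := (Int.dvd_iff_dvd_of_dvd_sub hpd).mp h1
    have := Int.le_of_dvd one_pos this
    omega
  have hη0 : (η : ZMod p) ≠ 0 := by
    rw [Ne, ZMod.intCast_zmod_eq_zero_iff_dvd]; exact hnd
  have hfermat : ((η : ZMod p)) ^ (p - 1) = 1 := ZMod.pow_card_sub_one_eq_one hη0
  have hdvd1 : (p : ℤ) ∣ η ^ (p - 1) - 1 := by
    rw [← cast_pow_eq_one_iff]; exact hfermat
  have hnot2 : ¬ ((p : ℤ) ^ 2 ∣ η ^ (p - 1) - 1) := by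
    intro hdvd
    have hx : ((η : ZMod (p ^ 2))) ^ (p - 1) = 1 := by
      rw [cast_pow_eq_one_iff]; push_cast; exact hdvd
    have := orderOf_dvd_of_pow_eq_one hx
    rw [h2] at this
    have hle := Nat.le_of_dvd (by omega) this
    have h0 : 0 < p - 1 := by omega
    have := Nat.le_of_mul_le_mul_right (show p * (p - 1) ≤ 1 * (p - 1) by simpa using hle) h0
    omega
  obtain ⟨c, hc⟩ := hdvd1
  have hcη : η ^ (p - 1) = 1 + c * p := by linarith
  have hcnd : ¬ (p : ℤ) ∣ c := by
    intro ⟨u, hu⟩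
    exact hnot2 ⟨u, by rw [hc, hu]; ring⟩
  -- order of η mod p is p - 1
  have horderp : orderOf ((η : ZMod p)) = p - 1 := by
    set r := orderOf ((η : ZMod p)) with hr
    have hr1 : r ∣ p - 1 := orderOf_dvd_of_pow_eq_one hfermat
    have hxr : ((η : ZMod p)) ^ r = 1 := pow_orderOf_eq_one _
    rw [cast_pow_eq_one_iff] at hxr
    obtain ⟨t, ht⟩ := hxr
    have htd : (p : ℤ) ∣ (p : ℤ) * t := ⟨t, rfl⟩
    obtain ⟨A, hA⟩ := lemA hp hodd htd
    have hrp : ((η : ZMod (p ^ 2))) ^ (r * p) = 1 := by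
      rw [cast_pow_eq_one_iff]
      have : η ^ (r * p) = (1 + (p : ℤ) * t) ^ p := by
        rw [pow_mul]; congr 1; linarith
      rw [this, hA]
      push_cast
      exact ⟨t + t ^ 2 * A * p, by ring⟩
    have hdv := orderOf_dvd_of_pow_eq_one hrp
    rw [h2] at hdv
    rw [mul_comm r p] at hdv
    have : p - 1 ∣ r := (mul_dvd_mul_iff_left (show p ≠ 0 by omega)).mp hdv
    exact Nat.dvd_antisymm hr1 this
  intro d hd
  rw [Nat.totient_prime_pow hp (by omega)]
  set n := p ^ (d - 1) * (p - 1) with hn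
  have hmul : (p - 1) * p ^ (d - 1) = n := mul_comm _ _
  apply orderOf_eq_of_pow_and_pow_div_prime
  · exact Nat.mul_pos (pow_pos (by omega) _) (by omega)
  · obtain ⟨cj, hcj, _⟩ := lemC hp hodd hcη hcnd (d - 1)
    rw [cast_pow_eq_one_iff]
    push_cast
    rw [← hmul, hcj, show d - 1 + 1 = d by omega]
    exact ⟨cj, by ring⟩
  · intro q hq hqn hone
    rw [cast_pow_eq_one_iff] at hone
    push_cast at hone
    by_cases hqp : q = p
    · subst hqp
      have hd2 : 2 ≤ d := by
        by_contra hcon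
        have hd1 : d = 1 := by omega
        rw [hn, hd1] at hqn
        simp at hqn
        have := hqn
        omega
      have hneq : n = q * ((q - 1) * q ^ (d - 2)) := by
        rw [hn, show d - 1 = (d - 2) + 1 by omega]; ring
      have hnq : n / q = (q - 1) * q ^ (d - 2) := by
        rw [hneq, Nat.mul_div_cancel_left _ (by omega : 0 < q)]
      obtain ⟨cj, hcj, hcjnd⟩ := lemC hp hodd hcη hcnd (d - 2)
      rw [hnq, hcj, show d - 2 + 1 = d - 1 by omega] at hone
      have hone' : (q : ℤ) * (q : ℤ) ^ (d - 1) ∣ cj * (q : ℤ) ^ (d - 1) := by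
        have : (q : ℤ) ^ d = (q : ℤ) * (q : ℤ) ^ (d - 1) := by
          rw [← pow_succ', show d - 1 + 1 = d by omega]
        rw [← this]
        simpa using hone
      have : (q : ℤ) ∣ cj :=
        (mul_dvd_mul_iff_right (pow_ne_zero (d - 1) (by positivity : (q:ℤ) ≠ 0))).mp hone'
      exact hcjnd this
    · -- q divides p - 1
      have hq1 : q ∣ p - 1 := by
        rcases (Nat.Prime.dvd_mul hq).mp hqn with h | h
        · exact absurd ((Nat.prime_dvd_prime_iff_eq hq hp).mp (hq.dvd_of_dvd_pow h)) hqp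
        · exact h
      have hnq : n / q = p ^ (d - 1) * ((p - 1) / q) := by
        rw [hn, Nat.mul_div_assoc _ hq1]
      have hpdvd : (p : ℤ) ∣ η ^ (n / q) - 1 := by
        refine dvd_trans ?_ hone
        exact ⟨(p : ℤ) ^ (d - 1), by rw [← pow_succ', show d - 1 + 1 = d by omega]⟩
      have hxq : ((η : ZMod p)) ^ (n / q) = 1 := by
        rw [cast_pow_eq_one_iff]; exact hpdvd
      have hdv := orderOf_dvd_of_pow_eq_one hxq
      rw [horderp, hnq] at hdv
      have hcop : Nat.Coprime (p - 1) (p ^ (d - 1)) := by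
        have h1 : Nat.Coprime p (p - 1) := (hp.coprime_iff_not_dvd).mpr (by
          intro hdd; have := Nat.le_of_dvd (by omega) hdd; omega)
        exact (h1.symm.pow_right _)
      have hfin : p - 1 ∣ (p - 1) / q := hcop.dvd_of_dvd_mul_left hdv
      have hlt : (p - 1) / q < p - 1 := Nat.div_lt_self (by omega) hq.one_lt
      have hpos : 0 < (p - 1) / q := Nat.div_pos (Nat.le_of_dvd (by omega) hq1) hq.pos
      have := Nat.le_of_dvd hpos hfin
      omega

/-- There is an integer of multiplicative order `p(p-1)` modulo `p²`. -/
lemma lemExists {p : ℕ} (hp : p.Prime) (hodd : Odd p) :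
    ∃ η : ℤ, orderOf ((η : ZMod (p ^ 2))) = p * (p - 1) := by
  haveI : Fact p.Prime := ⟨hp⟩
  have hp3 : 3 ≤ p := by
    have := hp.two_le
    have : p ≠ 2 := by rintro rfl; exact (by norm_num : ¬ Odd 2) hodd
    omega
  haveI : NeZero (p ^ 2) := ⟨pow_ne_zero 2 (by omega)⟩
  obtain ⟨g, hg⟩ := IsCyclic.exists_generator (α := (ZMod p)ˣ)
  have hgo : orderOf g = p - 1 := by
    rw [orderOf_eq_card_of_forall_mem_zpowers hg, Nat.card_eq_fintype_card,
      ZMod.card_units_eq_totient, Nat.totient_prime hp]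
  have hdvd : p ∣ p ^ 2 := dvd_pow_self p two_ne_zero
  obtain ⟨u, hu⟩ := ZMod.unitsMap_surjective hdvd g
  have hcard : Fintype.card (ZMod (p ^ 2))ˣ = p * (p - 1) := by
    rw [ZMod.card_units_eq_totient, Nat.totient_prime_pow hp (by norm_num : 0 < 2)]
    simp
  have hup1 : (u ^ p) ^ (p - 1) = 1 := by
    rw [← pow_mul, ← hcard]
    exact pow_card_eq_one
  have himg : ZMod.unitsMap hdvd (u ^ p) = g := by
    rw [map_pow, hu]
    have hg1 : g ^ (p - 1) = 1 := by rw [← hgo]; exact pow_orderOf_eq_one g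
    calc g ^ p = g ^ (p - 1) * g := by
          rw [← pow_succ, show p - 1 + 1 = p by omega]
      _ = g := by rw [hg1, one_mul]
  have hupo : orderOf (u ^ p) = p - 1 := by
    refine Nat.dvd_antisymm (orderOf_dvd_of_pow_eq_one hup1) ?_
    rw [← hgo, ← himg]
    exact orderOf_map_dvd _ _
  -- the element 1 + p has order p
  set y : ZMod (p ^ 2) := (((1 + (p : ℤ)) : ℤ) : ZMod (p ^ 2)) with hy
  have hyo : orderOf y = p := by
    apply orderOf_eq_prime
    · rw [hy, cast_pow_eq_one_iff]
      obtain ⟨c', hc', _⟩ := lemB hp hodd (le_refl 1) (show ¬ (p:ℤ) ∣ 1 by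
        intro h; have := Int.le_of_dvd one_pos h; omega)
      refine ⟨c', ?_⟩
      have h' : ((1:ℤ) + (p:ℤ)) ^ p = 1 + c' * (p:ℤ) ^ 2 := by simpa using hc'
      push_cast
      rw [h']; ring
    · rw [hy]
      intro h
      have h0 : (((1 + (p : ℤ)) - 1 : ℤ) : ZMod (p ^ 2)) = 0 := by
        push_cast
        rw [show ((1:ZMod (p^2)) + (p:ZMod (p^2)) - 1) = (p : ZMod (p^2)) by ring]
        have : ((1 : ℤ) : ZMod (p^2)) = 1 := by push_cast; rfl
        push_cast at h
        rw [show ((p : ZMod (p^2))) = (1 + (p:ZMod (p^2))) - 1 by ring]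
        rw [h]; ring
      rw [ZMod.intCast_zmod_eq_zero_iff_dvd] at h0
      push_cast at h0
      have h1 : (p : ℤ) ^ 2 ∣ (p : ℤ) := by simpa using h0
      have := Int.le_of_dvd (by positivity) h1
      nlinarith [hp3]
  -- combine
  set a : ZMod (p ^ 2) := ((u ^ p : (ZMod (p ^ 2))ˣ) : ZMod (p ^ 2)) with ha
  have hao : orderOf a = p - 1 := by rw [ha, orderOf_units, hupo]
  have hcop : Nat.Coprime (orderOf a) (orderOf y) := by
    rw [hao, hyo]
    exact ((hp.coprime_iff_not_dvd).mpr (by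
      intro hdd; have := Nat.le_of_dvd (by omega) hdd; omega)).symm
  have hzo : orderOf (a * y) = p * (p - 1) := by
    rw [(Commute.all a y).orderOf_mul_eq_mul_orderOf_of_coprime hcop, hao, hyo, mul_comm]
  refine ⟨((a * y).val : ℤ), ?_⟩
  have : ((((a * y).val : ℤ)) : ZMod (p ^ 2)) = a * y := by
    push_cast
    exact ZMod.natCast_rightInverse (a * y)
  rw [this, hzo]


/-- An integer `η` is a primitive root modulo `N` if its residue class generates
the multiplicative group `(ZMod N)ˣ`, equivalently its multiplicative order is `φ(N)`. -/
def IsPrimitiveRootMod (η : ℤ) (N : ℕ) : Prop :=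
  orderOf ((η : ZMod N)) = Nat.totient N

/-- Existence of a primitive root system: given pairwise distinct odd primes `p i` and
positive exponents `e i`, there exist integers `η i` such that each `η i` is a primitive
root modulo `(p i)^d` for every `d ≥ 1` and `η i ≡ 1 (mod (p j)^(e j))` for all `j ≠ i`. -/
theorem stmt5 (s : ℕ) (p : Fin s → ℕ) (e : Fin s → ℕ)
    (hp : ∀ i, (p i).Prime) (hpodd : ∀ i, Odd (p i))
    (hdist : ∀ i j, i ≠ j → p i ≠ p j) (he : ∀ i, 0 < e i) :
    ∃ η : Fin s → ℤ,
      ∀ i, (∀ d : ℕ, 1 ≤ d → IsPrimitiveRootMod (η i) ((p i) ^ d)) ∧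
        ∀ j, j ≠ i → ((p j : ℤ) ^ (e j)) ∣ (η i - 1) := by
  have key : ∀ i, ∃ ηi : ℤ,
      (∀ d : ℕ, 1 ≤ d → orderOf ((ηi : ZMod ((p i) ^ d))) = Nat.totient ((p i) ^ d)) ∧
      ∀ j, j ≠ i → ((p j : ℤ) ^ (e j)) ∣ (ηi - 1) := by
    intro i
    obtain ⟨η0, hη0⟩ := lemExists (hp i) (hpodd i)
    set Q : ℤ := ∏ j ∈ Finset.univ.erase i, (p j : ℤ) ^ (e j) with hQ
    have hcop : IsCoprime Q ((p i : ℤ) ^ 2) := by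
      apply IsCoprime.prod_left
      intro j hj
      have hj' : j ≠ i := Finset.ne_of_mem_erase hj
      have hco : Nat.Coprime (p j) (p i) :=
        (Nat.coprime_primes (hp j) (hp i)).mpr (hdist j i hj')
      exact (IsCoprime.pow (Nat.isCoprime_iff_coprime.mpr hco))
    obtain ⟨A, B, hAB⟩ := hcop
    set η : ℤ := 1 + (η0 - 1) * (A * Q) with hη
    have hdiff : ((p i : ℤ) ^ 2) ∣ η - η0 := by
      refine ⟨-(η0 - 1) * B, ?_⟩
      rw [hη]
      linear_combination (η0 - 1) * hAB
    have hcast : ((η : ZMod ((p i) ^ 2))) = ((η0 : ZMod ((p i) ^ 2))) := by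
      rw [← sub_eq_zero,
        show ((η : ZMod ((p i)^2)) - (η0 : ZMod ((p i)^2))) = (((η - η0 : ℤ)) : ZMod ((p i)^2))
          by push_cast; ring,
        ZMod.intCast_zmod_eq_zero_iff_dvd]
      push_cast
      exact hdiff
    refine ⟨η, ?_, ?_⟩
    · exact lemKey (hp i) (hpodd i) (by rw [hcast]; exact hη0)
    · intro j hj
      have hjQ : ((p j : ℤ) ^ (e j)) ∣ Q :=
        Finset.dvd_prod_of_mem _ (Finset.mem_erase.mpr ⟨hj, Finset.mem_univ j⟩)
      have : η - 1 = Q * ((η0 - 1) * A) := by rw [hη]; ring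
      rw [this]
      exact hjQ.trans ⟨(η0 - 1) * A, rfl⟩
  choose η hη using key
  exact ⟨η, fun i => ⟨fun d hd => (hη i).1 d hd, (hη i).2⟩⟩
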